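/- For every positive integer t and every nonnegative integer n, p_{t,t}(n) ≡ C̄_{4t,t}(n) (mod 2). -/

import Mathlib

open PowerSeries Finset

/-- The ordinary partition function `p`, extended by zero to negative integers. -/
noncomputable def pInt (m : ℤ) : ℤ :=
  if 0 ≤ m then (Fintype.card (Nat.Partition m.toNat) : ℤ) else 0

/-- `(q^t; q^t)_∞ = ∏_{j ≥ 1} (1 - q^{t j})` as a formal power series over ℤ
(the `n`-th coefficient only depends on the factors with `t(j+1) ≤ n`, so the
truncated finite product gives the correct coefficient). -/
noncomputable def euler (t : ℕ) : PowerSeries ℤ :=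
  PowerSeries.mk fun n =>
    PowerSeries.coeff n
      (∏ j ∈ Finset.range (n + 1), (1 - (PowerSeries.X : PowerSeries ℤ) ^ (t * (j + 1))))

/-- `Σ_{k ≥ 0} (-1)^k q^{t k (k+1)/2}` as a formal power series over ℤ. -/
noncomputable def theta (t : ℕ) : PowerSeries ℤ :=
  PowerSeries.mk fun m =>
    ∑ k ∈ Finset.range (m + 1), if 2 * m = t * k * (k + 1) then (-1 : ℤ) ^ k else 0

/-- `Σ_{k ≥ 0} (-1)^k q^{t k^2}` as a formal power series over ℤ. -/
noncomputable def thetaSq (t : ℕ) : PowerSeries ℤ :=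
  PowerSeries.mk fun m =>
    ∑ k ∈ Finset.range (m + 1), if m = t * k ^ 2 then (-1 : ℤ) ^ k else 0

/-- `(-q^a; q^k)_∞ = ∏_{j ≥ 0} (1 + q^{a + k j})` as a formal power series over ℤ. -/
noncomputable def aqk (a k : ℕ) : PowerSeries ℤ :=
  PowerSeries.mk fun n =>
    PowerSeries.coeff n
      (∏ j ∈ Finset.range (n + 1), (1 + (PowerSeries.X : PowerSeries ℤ) ^ (a + k * j)))

/-- Extension of a function on ℕ by zero to ℤ. -/
noncomputable def extZ (f : ℕ → ℤ) : ℤ → ℤ := fun m => if 0 ≤ m then f m.toNat else 0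

namespace St11

abbrev F := ZMod 2
abbrev PS := PowerSeries F

noncomputable def XX : PS := PowerSeries.X

/-- Gaussian binomial at q = X^(4t), defined by Pascal recurrence. -/
noncomputable def gs (t : ℕ) : ℕ → ℕ → PS
  | 0, 0 => 1
  | 0, _+1 => 0
  | _+1, 0 => 1
  | m+1, k+1 => gs t m k + XX ^ (4*t*(k+1)) * gs t m (k+1)

/-- truncated (q^{4t};q^{4t})-product -/
noncomputable def eP (t M : ℕ) : PS := ∏ j ∈ Finset.range M, (1 + XX ^ (4*t*(j+1)))

lemma gs_zero_right (t m : ℕ) : gs t m 0 = 1 := by cases m <;> rfl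

lemma gs_eq_zero (t : ℕ) : ∀ m k, m < k → gs t m k = 0 := by
  intro m
  induction m with
  | zero => intro k hk; match k, hk with | k+1, _ => rfl
  | succ m ih =>
    intro k hk
    match k, hk with
    | k+1, hk =>
      show gs t m k + XX ^ (4*t*(k+1)) * gs t m (k+1) = 0
      rw [ih k (by omega), ih (k+1) (by omega), mul_zero, add_zero]

lemma gs_diag (t : ℕ) : ∀ m, gs t m m = 1 := by
  intro m
  induction m with
  | zero => rfl
  | succ m ih =>
    show gs t m m + XX ^ (4*t*(m+1)) * gs t m (m+1) = 1
    rw [ih, gs_eq_zero t m (m+1) (by omega), mul_zero, add_zero]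

lemma two_eq_zero : (2 : PS) = 0 := by
  have h : (2 : PS) = C (1+1 : F) := by rw [map_add, map_one]; norm_num
  rw [h, show (1+1 : F) = 0 from rfl, map_zero]

lemma eP_succ (t M : ℕ) : eP t (M+1) = eP t M * (1 + XX ^ (4*t*(M+1))) :=
  Finset.prod_range_succ _ _

lemma eP_zero (t : ℕ) : eP t 0 = 1 := rfl

lemma gs_prod (t : ℕ) : ∀ m k, k ≤ m → gs t m k * eP t k * eP t (m-k) = eP t m := by
  intro m
  induction m with
  | zero => intro k hk
            have : k = 0 := by omega
            subst this; simp [gs, eP_zero]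
  | succ m ih =>
    intro k hk
    cases k with
    | zero => simp [gs_zero_right, eP_zero]
    | succ k =>
      rcases Nat.lt_or_ge k m with hkm | hkm
      · -- k+1 ≤ m
        have e1 : eP t (k+1) = eP t k * (1 + XX ^ (4*t*(k+1))) := eP_succ t k
        have hsub : m + 1 - (k+1) = (m - (k+1)) + 1 := by omega
        have e2 : eP t (m+1-(k+1)) = eP t (m-(k+1)) * (1 + XX ^ (4*t*(m-k))) := by
          rw [hsub, eP_succ, show m-(k+1)+1 = m-k from by omega]
        have ih1 : gs t m k * eP t k * eP t (m-k) = eP t m := ih k (by omega)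
        have ih2 : gs t m (k+1) * eP t (k+1) * eP t (m-(k+1)) = eP t m := ih (k+1) hkm
        have hd : gs t (m+1) (k+1) = gs t m k + XX ^ (4*t*(k+1)) * gs t m (k+1) := rfl
        have e3 : eP t (m-k) = eP t (m-(k+1)) * (1 + XX ^ (4*t*(m-k))) := by
          rw [show m - k = (m - (k+1)) + 1 by omega, eP_succ, show m-(k+1)+1 = m-k from by omega]
        have e4 : eP t (m+1) = eP t m * (1 + XX ^ (4*t*(m+1))) := eP_succ t m
        have hq : XX ^ (4*t*(k+1)) * XX ^ (4*t*(m-k)) = XX ^ (4*t*(m+1)) := by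
          rw [← pow_add]
          congr 1
          have : k + 1 + (m - k) = m + 1 := by omega
          calc 4*t*(k+1) + 4*t*(m-k) = 4*t*((k+1)+(m-k)) := by ring
            _ = 4*t*(m+1) := by rw [this]
        rw [e3] at ih1
        rw [e1] at ih2
        rw [hd, e1, e2, e4]
        have h2 := two_eq_zero
        linear_combination (1 + XX ^ (4*t*(k+1))) * ih1
          + XX ^ (4*t*(k+1)) * (1 + XX ^ (4*t*(m-k))) * ih2
          + eP t m * hq + eP t m * XX ^ (4*t*(k+1)) * h2
      · -- k = m (since k+1 ≤ m+1 and k ≥ m)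
        have : k = m := by omega
        subst this
        rw [gs_diag, Nat.sub_self, eP_zero]
        ring

end St11

namespace St11
open PowerSeries Finset

lemma constantCoeff_eP (t : ℕ) (ht : 0 < t) (M : ℕ) : constantCoeff (eP t M) = 1 := by
  unfold eP XX
  rw [map_prod]
  rw [Finset.prod_congr rfl (fun j _ => ?_), Finset.prod_const_one]
  rw [map_add, map_one, map_pow, constantCoeff_X, zero_pow (by positivity), add_zero]

lemma eP_ne_zero (t : ℕ) (ht : 0 < t) (M : ℕ) : eP t M ≠ 0 := by
  intro h
  have := constantCoeff_eP t ht M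
  rw [h, map_zero] at this
  exact zero_ne_one this

lemma gs_succ_succ (t m k : ℕ) :
    gs t (m+1) (k+1) = gs t m k + XX ^ (4*t*(k+1)) * gs t m (k+1) := rfl

lemma gs_pascal2 (t : ℕ) (ht : 0 < t) (m k : ℕ) :
    gs t (m+1) (k+1) = gs t m (k+1) + XX ^ (4*t*(m-k)) * gs t m k := by
  rcases Nat.lt_or_ge k m with hkm | hkm
  · have h1 : gs t (m+1) (k+1) * eP t (k+1) * eP t (m-k) = eP t (m+1) := by
      have := gs_prod t (m+1) (k+1) (by omega)
      rwa [show m+1-(k+1) = m-k from by omega] at this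
    have h2 : (gs t m (k+1) + XX ^ (4*t*(m-k)) * gs t m k) * eP t (k+1) * eP t (m-k)
        = eP t (m+1) := by
      have ih1 : gs t m k * eP t k * eP t (m-k) = eP t m := gs_prod t m k (by omega)
      have ih2 : gs t m (k+1) * eP t (k+1) * eP t (m-(k+1)) = eP t m := gs_prod t m (k+1) hkm
      have e1 : eP t (k+1) = eP t k * (1 + XX ^ (4*t*(k+1))) := eP_succ t k
      have e3 : eP t (m-k) = eP t (m-(k+1)) * (1 + XX ^ (4*t*(m-k))) := by
        rw [show m - k = (m - (k+1)) + 1 by omega, eP_succ, show m-(k+1)+1 = m-k from by omega]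
      have e4 : eP t (m+1) = eP t m * (1 + XX ^ (4*t*(m+1))) := eP_succ t m
      have hq : XX ^ (4*t*(k+1)) * XX ^ (4*t*(m-k)) = XX ^ (4*t*(m+1)) := by
        rw [← pow_add]
        congr 1
        have h5 : k + 1 + (m - k) = m + 1 := by omega
        calc 4*t*(k+1) + 4*t*(m-k) = 4*t*((k+1)+(m-k)) := by ring
          _ = 4*t*(m+1) := by rw [h5]
      rw [e3] at ih1
      rw [e1] at ih2
      rw [e1, e3, e4]
      have h2' := two_eq_zero
      linear_combination (1 + XX ^ (4*t*(m-k))) * ih2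
        + XX ^ (4*t*(m-k)) * (1 + XX ^ (4*t*(k+1))) * ih1
        + eP t m * hq + eP t m * XX ^ (4*t*(m-k)) * h2'
    have := h1.trans h2.symm
    have c1 := mul_right_cancel₀ (eP_ne_zero t ht (m-k)) this
    exact mul_right_cancel₀ (eP_ne_zero t ht (k+1)) c1
  · rcases Nat.eq_or_lt_of_le hkm with heq | hlt
    · rw [← heq]
      rw [gs_diag, gs_eq_zero t m (m+1) (by omega), Nat.sub_self]
      simp [gs_diag]
    · rw [gs_eq_zero t (m+1) (k+1) (by omega), gs_eq_zero t m (k+1) (by omega),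
        gs_eq_zero t m k (by omega)]
      simp

/-- the exponent function: `ee N k = 2 d^2 + d` where `d = k - N` as an integer. -/
def ee (N k : ℕ) : ℕ := (2*((k:ℤ)-(N:ℤ))^2 + ((k:ℤ)-(N:ℤ))).toNat

lemma ee_nonnegZ (d : ℤ) : 0 ≤ 2*d^2 + d := by nlinarith [sq_nonneg d, sq_nonneg (d+1)]

lemma ee_castZ (N k : ℕ) : (ee N k : ℤ) = 2*((k:ℤ)-N)^2 + ((k:ℤ)-N) :=
  Int.toNat_of_nonneg (ee_nonnegZ _)

lemma ee_step (N k : ℕ) : (ee N (k+1) : ℤ) = (ee N k : ℤ) + 4*(k:ℤ) - 4*(N:ℤ) + 3 := by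
  rw [ee_castZ, ee_castZ]; push_cast; ring

lemma ee_shift (N k : ℕ) : ee (N+1) (k+1) = ee N k := by
  have h : ((ee (N+1) (k+1)):ℤ) = ((ee N k : ℕ) : ℤ) := by
    rw [ee_castZ, ee_castZ]; push_cast; ring
  exact_mod_cast h

lemma ee_down (N : ℕ) : (ee (N+1) 0 : ℤ) = (ee N 0 : ℤ) + 4*(N:ℤ) + 1 := by
  rw [ee_castZ, ee_castZ]; push_cast; ring

lemma eeA (t N k : ℕ) (h : k ≤ 2*N) :
    4*t*(2*N-k) + t * ee N (k+1) = (3*t+4*t*N) + t * ee N k := by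
  have h1 : 4*(2*N-k) + ee N (k+1) = (3+4*N) + ee N k := by
    have h2 := ee_step N k
    have h3 : ((2*N-k : ℕ) : ℤ) = 2*(N:ℤ) - k := by omega
    omega
  calc 4*t*(2*N-k) + t * ee N (k+1) = t * (4*(2*N-k) + ee N (k+1)) := by ring
    _ = t * ((3+4*N) + ee N k) := by rw [h1]
    _ = (3*t+4*t*N) + t * ee N k := by ring

lemma eeB (t N k : ℕ) :
    4*t*(k+1) + t * ee N k = (t+4*t*N) + t * ee N (k+1) := by
  have h1 : 4*(k+1) + ee N k = (1+4*N) + ee N (k+1) := by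
    have h2 := ee_step N k
    omega
  calc 4*t*(k+1) + t * ee N k = t * (4*(k+1) + ee N k) := by ring
    _ = t * ((1+4*N) + ee N (k+1)) := by rw [h1]
    _ = (t+4*t*N) + t * ee N (k+1) := by ring

lemma eeC (t N : ℕ) : t * ee (N+1) 0 = (t+4*t*N) + t * ee N 0 := by
  have h1 : ee (N+1) 0 = (1+4*N) + ee N 0 := by
    have h2 := ee_down N
    omega
  calc t * ee (N+1) 0 = t * ((1+4*N) + ee N 0) := by rw [h1]
    _ = (t+4*t*N) + t * ee N 0 := by ring

noncomputable def Ssym (t N : ℕ) : PS := ∑ k ∈ range (2*N+1), gs t (2*N) k * XX ^ (t * ee N k)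
noncomputable def Shalf (t N : ℕ) : PS := ∑ k ∈ range (2*N+2), gs t (2*N+1) k * XX ^ (t * ee N k)
noncomputable def LL (t N : ℕ) : PS :=
  ∏ j ∈ range N, ((1 + XX^(t+4*t*j)) * (1 + XX^(3*t+4*t*j)))

lemma stepA (t N : ℕ) (ht : 0 < t) : Shalf t N = Ssym t N * (1 + XX^(3*t+4*t*N)) := by
  have key : ∀ k ∈ range (2*N+1),
      gs t (2*N+1) (k+1) * XX ^ (t * ee N (k+1))
      = gs t (2*N) (k+1) * XX ^ (t * ee N (k+1))
        + XX ^ (3*t+4*t*N) * (gs t (2*N) k * XX ^ (t * ee N k)) := by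
    intro k hk
    have hk' : k ≤ 2*N := by
      have := mem_range.mp hk; omega
    rw [gs_pascal2 t ht (2*N) k]
    calc (gs t (2*N) (k+1) + XX ^ (4*t*(2*N-k)) * gs t (2*N) k) * XX ^ (t * ee N (k+1))
        = gs t (2*N) (k+1) * XX ^ (t * ee N (k+1))
          + gs t (2*N) k * XX ^ (4*t*(2*N-k) + t * ee N (k+1)) := by rw [pow_add]; ring
      _ = _ := by rw [eeA t N k hk', pow_add]; ring
  unfold Shalf
  rw [Finset.sum_range_succ' (fun k => gs t (2*N+1) k * XX ^ (t * ee N k)) (2*N+1)]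
  rw [Finset.sum_congr rfl key, Finset.sum_add_distrib, ← Finset.mul_sum]
  have h1 : ∑ k ∈ range (2*N+1), gs t (2*N) (k+1) * XX ^ (t * ee N (k+1))
      = Ssym t N - gs t (2*N) 0 * XX ^ (t * ee N 0) := by
    have h2 := Finset.sum_range_succ' (fun k => gs t (2*N) k * XX ^ (t * ee N k)) (2*N+1)
    have h3 : ∑ k ∈ range (2*N+1+1), gs t (2*N) k * XX ^ (t * ee N k) = Ssym t N := by
      rw [Finset.sum_range_succ, gs_eq_zero t (2*N) (2*N+1) (by omega)]
      simp [Ssym]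
    rw [h3] at h2
    exact eq_sub_of_add_eq h2.symm
  rw [h1, gs_zero_right, gs_zero_right]
  show Ssym t N - 1 * XX ^ (t * ee N 0) + XX ^ (3*t+4*t*N) * Ssym t N
      + 1 * XX ^ (t * ee N 0) = Ssym t N * (1 + XX ^ (3*t+4*t*N))
  ring

lemma stepB (t N : ℕ) (ht : 0 < t) : Ssym t (N+1) = Shalf t N * (1 + XX^(t+4*t*N)) := by
  have key : ∀ k ∈ range (2*N+2),
      gs t (2*N+2) (k+1) * XX ^ (t * ee (N+1) (k+1))
      = gs t (2*N+1) k * XX ^ (t * ee N k)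
        + XX ^ (t+4*t*N) * (gs t (2*N+1) (k+1) * XX ^ (t * ee N (k+1))) := by
    intro k hk
    rw [show 2*N+2 = (2*N+1)+1 from rfl, gs_succ_succ, ee_shift]
    calc (gs t (2*N+1) k + XX ^ (4*t*(k+1)) * gs t (2*N+1) (k+1)) * XX ^ (t * ee N k)
        = gs t (2*N+1) k * XX ^ (t * ee N k)
          + gs t (2*N+1) (k+1) * XX ^ (4*t*(k+1) + t * ee N k) := by rw [pow_add]; ring
      _ = _ := by rw [eeB t N k, pow_add]; ring
  unfold Ssym
  rw [show 2*(N+1) = 2*N+2 from by ring]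
  rw [Finset.sum_range_succ' (fun k => gs t (2*N+2) k * XX ^ (t * ee (N+1) k)) (2*N+2)]
  rw [Finset.sum_congr rfl key, Finset.sum_add_distrib, ← Finset.mul_sum]
  have h1 : ∑ k ∈ range (2*N+2), gs t (2*N+1) (k+1) * XX ^ (t * ee N (k+1))
      = Shalf t N - gs t (2*N+1) 0 * XX ^ (t * ee N 0) := by
    have h2 := Finset.sum_range_succ' (fun k => gs t (2*N+1) k * XX ^ (t * ee N k)) (2*N+2)
    have h3 : ∑ k ∈ range (2*N+2+1), gs t (2*N+1) k * XX ^ (t * ee N k) = Shalf t N := by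
      rw [Finset.sum_range_succ, gs_eq_zero t (2*N+1) (2*N+2) (by omega)]
      simp [Shalf]
    rw [h3] at h2
    exact eq_sub_of_add_eq h2.symm
  rw [h1, gs_zero_right]
  have hC : XX ^ (t+4*t*N) * XX ^ (t * ee N 0) = XX ^ (t * ee (N+1) 0) := by
    rw [← pow_add, eeC t N]
  have hg0 : gs t (2*N+2) 0 = 1 := gs_zero_right t _
  rw [hg0]
  show Shalf t N + XX ^ (t+4*t*N) * (Shalf t N - 1 * XX ^ (t * ee N 0))
      + 1 * XX ^ (t * ee (N+1) 0) = Shalf t N * (1 + XX ^ (t+4*t*N))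
  rw [← hC]
  ring

lemma FIN (t : ℕ) (ht : 0 < t) : ∀ N, Ssym t N = LL t N := by
  intro N
  induction N with
  | zero =>
    show ∑ k ∈ range 1, gs t 0 k * XX ^ (t * ee 0 k) = LL t 0
    rw [Finset.sum_range_one]
    have : ee 0 0 = 0 := rfl
    rw [this]
    simp [gs, LL]
  | succ N ih =>
    rw [stepB t N ht, stepA t N ht, ih]
    unfold LL
    rw [Finset.prod_range_succ]
    ring

end St11

namespace St11
open PowerSeries Finset

noncomputable def Ipow (n : ℕ) : Ideal PS := Ideal.span {XX^(n+1)}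
noncomputable def qm (n : ℕ) : PS →+* PS ⧸ Ipow n := Ideal.Quotient.mk (Ipow n)

lemma qm_X_pow (n m : ℕ) (h : n < m) : qm n (XX^m) = 0 := by
  rw [qm, Ideal.Quotient.eq_zero_iff_mem, Ipow, Ideal.mem_span_singleton]
  exact pow_dvd_pow _ (by omega)

lemma qm_eP_stab (t n : ℕ) (ht : 0 < t) : ∀ M, n ≤ M → qm n (eP t M) = qm n (eP t n) := by
  intro M hM
  refine Nat.le_induction rfl ?_ M hM
  intro M hM ih
  have hlt : n < 4*t*(M+1) := by nlinarith
  rw [eP_succ, map_mul, map_add, map_one, qm_X_pow n _ hlt, add_zero, mul_one, ih]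

lemma X_dvd_eP_sub_one (t : ℕ) (ht : 0 < t) : ∀ M, (XX : PS) ∣ (eP t M - 1) := by
  intro M
  induction M with
  | zero => simp [eP_zero]
  | succ M ih =>
    have h : eP t (M+1) - 1 = (eP t M - 1) * (1 + XX^(4*t*(M+1))) + XX^(4*t*(M+1)) := by
      rw [eP_succ]; ring
    rw [h]
    exact dvd_add (ih.mul_right _) (dvd_pow_self XX (by positivity))

lemma isUnit_qm_eP (t n : ℕ) (ht : 0 < t) : IsUnit (qm n (eP t n)) := by
  have hd := X_dvd_eP_sub_one t ht n
  have h : qm n (eP t n) = 1 + qm n (eP t n - 1) := by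
    rw [← map_one (qm n), ← map_add]
    congr 1
    ring
  rw [h]
  apply IsNilpotent.isUnit_one_add
  refine ⟨n+1, ?_⟩
  rw [← map_pow, qm, Ideal.Quotient.eq_zero_iff_mem, Ipow, Ideal.mem_span_singleton]
  obtain ⟨c, hc⟩ := hd
  rw [hc, mul_pow]
  exact dvd_mul_right _ _

lemma ee_window (N k n : ℕ) (h : ee N k ≤ n) : N - n ≤ k ∧ k ≤ N + n := by
  have hc := ee_castZ N k
  have h' : (ee N k : ℤ) ≤ n := by exact_mod_cast h
  have h1 : ((k:ℤ) - N) ≤ n := by nlinarith [sq_nonneg ((k:ℤ) - N)]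
  have h2 : -(n:ℤ) ≤ (k:ℤ) - N := by nlinarith [sq_nonneg ((k:ℤ) - N + 1)]
  omega

noncomputable def A1 (t N : ℕ) : PS := ∏ j ∈ range N, (1 + XX^(t + 4*t*j))
noncomputable def A3 (t N : ℕ) : PS := ∏ j ∈ range N, (1 + XX^(3*t + 4*t*j))
noncomputable def TH (t N : ℕ) : PS := ∑ k ∈ range (2*N+1), XX^(t * ee N k)

lemma A1_mul_A3 (t N : ℕ) : A1 t N * A3 t N = LL t N := by
  rw [A1, A3, LL, ← Finset.prod_mul_distrib]

lemma core_dvd (t n : ℕ) (ht : 0 < t) :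
    (XX:PS)^(n+1) ∣ (eP t (2*n+2) * (A1 t (2*n+2) * A3 t (2*n+2)) - TH t (2*n+2)) := by
  set N := 2*n+2 with hN
  suffices h : qm n (eP t N * (A1 t N * A3 t N)) = qm n (TH t N) by
    have h2 := Ideal.Quotient.eq.mp h
    rwa [Ipow, Ideal.mem_span_singleton] at h2
  rw [A1_mul_A3, ← FIN t ht N, Ssym, TH, Finset.mul_sum, map_sum, map_sum]
  apply Finset.sum_congr rfl
  intro k hk
  by_cases hbig : n < t * ee N k
  · rw [map_mul, map_mul, qm_X_pow n _ hbig, mul_zero, mul_zero]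
  · push_neg at hbig
    have hee : ee N k ≤ n := le_trans (Nat.le_mul_of_pos_left _ ht) hbig
    have hwin := ee_window N k n hee
    have hk2N : k ≤ 2*N := by
      have := mem_range.mp hk; omega
    have hprod := gs_prod t (2*N) k hk2N
    have e1 : qm n (eP t k) = qm n (eP t n) := qm_eP_stab t n ht k (by omega)
    have e2 : qm n (eP t (2*N-k)) = qm n (eP t n) := qm_eP_stab t n ht _ (by omega)
    have e3 : qm n (eP t (2*N)) = qm n (eP t n) := qm_eP_stab t n ht _ (by omega)
    have e4 : qm n (eP t N) = qm n (eP t n) := qm_eP_stab t n ht _ (by omega)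
    have hu := isUnit_qm_eP t n ht
    have h5 : (qm n (gs t (2*N) k) * qm n (eP t n)) * qm n (eP t n) = 1 * qm n (eP t n) := by
      have h6 := congrArg (qm n) hprod
      rw [map_mul, map_mul, e1, e2, e3] at h6
      rw [one_mul]
      exact h6
    have h6 : qm n (gs t (2*N) k) * qm n (eP t n) = 1 := hu.mul_right_cancel h5
    rw [map_mul, map_mul, e4]
    calc qm n (eP t n) * (qm n (gs t (2*N) k) * qm n (XX ^ (t * ee N k)))
        = (qm n (gs t (2*N) k) * qm n (eP t n)) * qm n (XX ^ (t * ee N k)) := by ring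
      _ = qm n (XX ^ (t * ee N k)) := by rw [h6, one_mul]

end St11

namespace St11
open PowerSeries Finset

lemma XX_def : XX = (PowerSeries.X : PS) := rfl

lemma coeff_prod_stab (m : ℕ) (w : ℕ → ℕ) (M M' : ℕ) (hMM : M' ≤ M)
    (hw : ∀ j, M' ≤ j → m < w j) :
    (PowerSeries.coeff m) (∏ j ∈ range M, (1 + XX^(w j)))
      = (PowerSeries.coeff m) (∏ j ∈ range M', (1 + XX^(w j))) := by
  refine Nat.le_induction rfl ?_ M hMM
  intro M hM ih
  rw [Finset.prod_range_succ]
  have h : (∏ j ∈ range M, (1+XX^(w j))) * (1 + XX^(w M))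
      = (∏ j ∈ range M, (1+XX^(w j))) + (∏ j ∈ range M, (1+XX^(w j))) * (PowerSeries.X : PS)^(w M) := by
    rw [← XX_def]; ring
  rw [h, map_add, PowerSeries.coeff_mul_X_pow', if_neg (not_le.mpr (hw M hM)), add_zero, ih]

lemma cng_of_coeff {n : ℕ} {a b : PS} (h : ∀ m, m ≤ n → coeff m a = coeff m b) :
    XX^(n+1) ∣ (a - b) := by
  rw [XX_def, PowerSeries.X_pow_dvd_iff]
  intro m hm
  rw [map_sub, sub_eq_zero]
  exact h m (by omega)

lemma coeff_eq_of_cng {n : ℕ} {a b : PS} (h : XX^(n+1) ∣ (a - b)) :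
    ∀ m, m ≤ n → coeff m a = coeff m b := by
  rw [XX_def, PowerSeries.X_pow_dvd_iff] at h
  intro m hm
  have := h m (by omega)
  rw [map_sub, sub_eq_zero] at this
  exact this

lemma cng_mul {n : ℕ} {a a' b b' : PS} (h1 : XX^(n+1) ∣ (a - a')) (h2 : XX^(n+1) ∣ (b - b')) :
    XX^(n+1) ∣ (a*b - a'*b') := by
  have h : a*b - a'*b' = a*(b-b') + (a-a')*b' := by ring
  rw [h]
  exact dvd_add (h2.mul_left _) (h1.mul_right _)

noncomputable def σ : ℤ →+* F := Int.castRingHom F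

lemma neg_eq_self (p : PS) : -p = p := by
  have h : p + p = 0 := by
    have h2 := two_eq_zero
    calc p + p = 2 * p := by ring
      _ = 0 := by rw [h2, zero_mul]
  exact neg_eq_of_add_eq_zero_left h

lemma coeff_map_aqk (a k m : ℕ) :
    coeff m (PowerSeries.map σ (aqk a k))
      = coeff m (∏ j ∈ range (m+1), (1 + XX^(a + k*j))) := by
  rw [PowerSeries.coeff_map, aqk, PowerSeries.coeff_mk, ← PowerSeries.coeff_map]
  congr 1
  rw [map_prod]
  apply Finset.prod_congr rfl
  intro j _
  rw [map_add, map_one, map_pow, PowerSeries.map_X, XX_def]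

lemma coeff_map_euler (t m : ℕ) :
    coeff m (PowerSeries.map σ (euler t))
      = coeff m (∏ j ∈ range (m+1), (1 + XX^(t * (j+1)))) := by
  rw [PowerSeries.coeff_map, euler, PowerSeries.coeff_mk, ← PowerSeries.coeff_map]
  congr 1
  rw [map_prod]
  apply Finset.prod_congr rfl
  intro j _
  rw [map_sub, map_one, map_pow, PowerSeries.map_X, XX_def, sub_eq_add_neg, neg_eq_self]

lemma aqk_cng (a k n N : ℕ) (ha : 0 < a) (hk : 0 < k) (hN : n + 1 ≤ N) :
    XX^(n+1) ∣ (PowerSeries.map σ (aqk a k) - ∏ j ∈ range N, (1 + XX^(a + k*j))) := by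
  apply cng_of_coeff
  intro m hm
  rw [coeff_map_aqk]
  exact (coeff_prod_stab m _ N (m+1) (by omega) (fun j hj => by nlinarith)).symm

lemma euler_cng (t n N : ℕ) (ht : 0 < t) (hN : n + 1 ≤ N) :
    XX^(n+1) ∣ (PowerSeries.map σ (euler t) - ∏ j ∈ range N, (1 + XX^(t*(j+1)))) := by
  apply cng_of_coeff
  intro m hm
  rw [coeff_map_euler]
  exact (coeff_prod_stab m _ N (m+1) (by omega) (fun j hj => by nlinarith)).symm

lemma coeff_map_theta (t m : ℕ) :
    coeff m (PowerSeries.map σ (theta t))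
      = ∑ k ∈ range (m+1), (if 2*m = t*k*(k+1) then (1:F) else 0) := by
  rw [PowerSeries.coeff_map, theta, PowerSeries.coeff_mk, map_sum]
  apply Finset.sum_congr rfl
  intro k _
  rw [apply_ite σ, map_zero]
  congr 1
  rw [map_pow, map_neg, map_one]
  rw [show (-1 : F) = 1 from rfl, one_pow]

lemma coeff_TH (t N m : ℕ) :
    coeff m (TH t N) = ∑ k ∈ range (2*N+1), (if m = t * ee N k then (1:F) else 0) := by
  rw [TH, map_sum]
  apply Finset.sum_congr rfl
  intro k _
  rw [XX_def, PowerSeries.coeff_X_pow]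

end St11

namespace St11
open PowerSeries Finset

lemma ee_at_add (N d : ℕ) : ee N (N+d) = 2*d^2 + d := by
  have h : ((ee N (N+d)):ℤ) = ((2*d^2 + d : ℕ) : ℤ) := by
    rw [ee_castZ]; push_cast; ring
  exact_mod_cast h

lemma ee_at_sub (N d : ℕ) (hd : d ≤ N) : ((ee N (N-d) : ℕ):ℤ) = 2*(d:ℤ)^2 - d := by
  rw [ee_castZ]
  rw [show ((N-d : ℕ):ℤ) = (N:ℤ) - d from by omega]
  ring

lemma count_eq (t m N : ℕ) (ht : 0 < t) (hmN : m ≤ N) :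
    (∑ k ∈ range (m+1), if 2*m = t*k*(k+1) then (1:F) else 0)
      = ∑ i ∈ range (2*N+1), (if m = t * ee N i then (1:F) else 0) := by
  rw [Finset.sum_boole, Finset.sum_boole]
  congr 1
  refine Finset.card_bij' (fun k _ => if k % 2 = 0 then N + k/2 else N - (k/2 + 1))
    (fun i _ => if N ≤ i then 2*(i - N) else 2*(N - i) - 1) ?_ ?_ ?_ ?_
  · -- forward membership
    intro k hk
    rw [Finset.mem_filter, Finset.mem_range] at hk
    obtain ⟨hkm, heq⟩ := hk
    rw [Finset.mem_filter, Finset.mem_range]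
    beta_reduce
    by_cases hpar : k % 2 = 0
    · rw [if_pos hpar]
      have hkd : k = 2*(k/2) := by omega
      set d := k/2 with hd
      refine ⟨by omega, ?_⟩
      rw [ee_at_add]
      have hr : t*(2*d)*(2*d+1) = 2*(t*(2*d^2+d)) := by ring
      have h2 : 2*m = 2*(t*(2*d^2+d)) := by rw [heq, hkd, hr]
      omega
    · rw [if_neg hpar]
      have hkd : k + 1 = 2*(k/2+1) := by omega
      set d := k/2 + 1 with hd
      have hk1 : 1 ≤ k := by omega
      have hdN : d ≤ N := by omega
      refine ⟨by omega, ?_⟩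
      have hv := ee_at_sub N d hdN
      have heqz : 2*(m:ℤ) = (t:ℤ)*(k:ℤ)*((k:ℤ)+1) := by exact_mod_cast heq
      have hkz : (k:ℤ) = 2*(d:ℤ) - 1 := by omega
      rw [hkz] at heqz
      have h2 : 2*(m:ℤ) = 2*((t:ℤ)*((ee N (N-d) : ℕ):ℤ)) := by
        rw [hv]; linear_combination heqz
      have h3 : (m:ℤ) = (t:ℤ)*((ee N (N-d):ℕ):ℤ) := by linarith
      exact_mod_cast h3
  · -- backward membership
    intro i hi
    rw [Finset.mem_filter, Finset.mem_range] at hi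
    obtain ⟨hiN, hmi⟩ := hi
    rw [Finset.mem_filter, Finset.mem_range]
    beta_reduce
    by_cases hNi : N ≤ i
    · rw [if_pos hNi]
      have hie : i = N + (i - N) := by omega
      set d := i - N with hd
      have hv : ee N i = 2*d^2 + d := by rw [hie, ee_at_add]
      have hle : 2*d ≤ 2*d^2 + d := by nlinarith
      have hm' : 2*d^2 + d ≤ m := by
        rw [hmi, hv]; exact Nat.le_mul_of_pos_left _ ht
      refine ⟨by omega, ?_⟩
      have hr : 2*(t*(2*d^2+d)) = t*(2*d)*(2*d+1) := by ring
      rw [hv] at hmi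
      rw [hmi, hr]
    · rw [if_neg hNi]
      push_neg at hNi
      set d := N - i with hd
      have hd1 : 1 ≤ d := by omega
      have hv : ((ee N i : ℕ):ℤ) = 2*(d:ℤ)^2 - d := by
        rw [show i = N - d from by omega]; exact ee_at_sub N d (by omega)
      have h1 : (2*(d:ℤ) - 1) ≤ 2*(d:ℤ)^2 - d := by nlinarith
      have h1' : (2*(d:ℤ) - 1) ≤ ((ee N i:ℕ):ℤ) := by rw [hv]; exact h1
      have h2 : ee N i ≤ m := by rw [hmi]; exact Nat.le_mul_of_pos_left _ ht
      refine ⟨by omega, ?_⟩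
      have heqz : (m:ℤ) = (t:ℤ)*((ee N i:ℕ):ℤ) := by exact_mod_cast hmi
      have h3 : 2*(m:ℤ) = (t:ℤ)*(2*(d:ℤ)-1)*(2*(d:ℤ)) := by
        rw [heqz, hv]; ring
      have hgz : ((2*(N-i)-1 : ℕ):ℤ) = 2*(d:ℤ)-1 := by omega
      have h4 : ((2*m : ℕ):ℤ) = ((t*(2*(N-i)-1)*((2*(N-i)-1)+1) : ℕ):ℤ) := by
        push_cast
        rw [hgz]
        push_cast at h3 ⊢
        linarith [h3]
      exact_mod_cast h4
  · -- left inverse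
    intro k hk
    rw [Finset.mem_filter, Finset.mem_range] at hk
    beta_reduce
    by_cases hpar : k % 2 = 0
    · simp only [if_pos hpar]
      rw [if_pos (show N ≤ N + k/2 by omega)]
      omega
    · simp only [if_neg hpar]
      have hk1 : 1 ≤ k := by omega
      have hdN : k/2 + 1 ≤ N := by omega
      rw [if_neg (show ¬ N ≤ N - (k/2+1) by omega)]
      omega
  · -- right inverse
    intro i hi
    rw [Finset.mem_filter, Finset.mem_range] at hi
    beta_reduce
    by_cases hNi : N ≤ i
    · rw [if_pos hNi]
      have h1 : (2*(i-N)) % 2 = 0 := by omega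
      simp only [if_pos h1]
      omega
    · rw [if_neg hNi]
      push_neg at hNi
      have h1 : ¬ ((2*(N-i)-1) % 2 = 0) := by omega
      simp only [if_neg h1]
      omega

lemma main_id (t : ℕ) (ht : 0 < t) :
    PowerSeries.map σ (theta t)
      = PowerSeries.map σ (euler (4*t)) * PowerSeries.map σ (aqk t (4*t))
          * PowerSeries.map σ (aqk (3*t) (4*t)) := by
  ext n
  have hNn : n + 1 ≤ 2*n+2 := by omega
  have c2 : XX^(n+1) ∣ (PowerSeries.map σ (euler (4*t)) - eP t (2*n+2)) :=
    euler_cng (4*t) n (2*n+2) (by omega) hNn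
  have c3 : XX^(n+1) ∣ (PowerSeries.map σ (aqk t (4*t)) - A1 t (2*n+2)) :=
    aqk_cng t (4*t) n (2*n+2) ht (by omega) hNn
  have c4 : XX^(n+1) ∣ (PowerSeries.map σ (aqk (3*t) (4*t)) - A3 t (2*n+2)) :=
    aqk_cng (3*t) (4*t) n (2*n+2) (by omega) (by omega) hNn
  have c5 := core_dvd t n ht
  have c1 : XX^(n+1) ∣ (PowerSeries.map σ (theta t) - TH t (2*n+2)) := by
    apply cng_of_coeff
    intro m hm
    rw [coeff_map_theta, coeff_TH]
    exact count_eq t m (2*n+2) ht (by omega)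
  have cR := cng_mul (cng_mul c2 c3) c4
  rw [show (eP t (2*n+2) * A1 t (2*n+2)) * A3 t (2*n+2)
      = eP t (2*n+2) * (A1 t (2*n+2) * A3 t (2*n+2)) from by ring] at cR
  have hfinal : XX^(n+1) ∣ (PowerSeries.map σ (theta t)
      - PowerSeries.map σ (euler (4*t)) * PowerSeries.map σ (aqk t (4*t))
          * PowerSeries.map σ (aqk (3*t) (4*t))) := by
    have h : PowerSeries.map σ (theta t)
        - PowerSeries.map σ (euler (4*t)) * PowerSeries.map σ (aqk t (4*t))
            * PowerSeries.map σ (aqk (3*t) (4*t))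
        = (PowerSeries.map σ (theta t) - TH t (2*n+2))
          - (eP t (2*n+2) * (A1 t (2*n+2) * A3 t (2*n+2)) - TH t (2*n+2))
          - (PowerSeries.map σ (euler (4*t)) * PowerSeries.map σ (aqk t (4*t))
              * PowerSeries.map σ (aqk (3*t) (4*t))
             - eP t (2*n+2) * (A1 t (2*n+2) * A3 t (2*n+2))) := by ring
    rw [h]
    exact dvd_sub (dvd_sub c1 c5) cR
  exact coeff_eq_of_cng hfinal n (le_refl n)

end St11

/-- p_{t,t}(n) ≡ C̄_{4t,t}(n) (mod 2) for all t ≥ 1, n ≥ 0. -/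
theorem stmt11 (t : ℕ) (ht : 0 < t) (f g : ℕ → ℤ)
    (hf : PowerSeries.mk f * euler 1 = theta t)
    (hg : PowerSeries.mk g * euler 1
        = euler (4 * t) * aqk t (4 * t) * aqk (3 * t) (4 * t)) (n : ℕ) :
    f n ≡ g n [ZMOD 2] := by
  have hf2 := congrArg (PowerSeries.map St11.σ) hf
  have hg2 := congrArg (PowerSeries.map St11.σ) hg
  rw [map_mul] at hf2 hg2
  rw [map_mul, map_mul] at hg2
  have hmain := St11.main_id t ht
  have heq : PowerSeries.map St11.σ (PowerSeries.mk f) * PowerSeries.map St11.σ (euler 1)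
      = PowerSeries.map St11.σ (PowerSeries.mk g) * PowerSeries.map St11.σ (euler 1) := by
    rw [hf2, hmain, ← hg2]
  have h0 : (PowerSeries.constantCoeff) (PowerSeries.map St11.σ (euler 1)) = 1 := by
    rw [← PowerSeries.coeff_zero_eq_constantCoeff_apply, St11.coeff_map_euler]
    rw [Finset.prod_range_one]
    simp [St11.XX_def, PowerSeries.coeff_one, PowerSeries.coeff_X_pow]
  have hu : IsUnit (PowerSeries.map St11.σ (euler 1)) := by
    rw [PowerSeries.isUnit_iff_constantCoeff, h0]
    exact isUnit_one
  have hfg := hu.mul_right_cancel heq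
  have hcoeff := congrArg (PowerSeries.coeff n) hfg
  rw [PowerSeries.coeff_map, PowerSeries.coeff_map, PowerSeries.coeff_mk,
    PowerSeries.coeff_mk] at hcoeff
  exact (ZMod.intCast_eq_intCast_iff _ _ _).mp hcoeff
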